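/- arXiv:2510.03929 — 3 statements merged into one kernel-verified Lean document; each statement's English description precedes it below -/
import Mathlib

section
/- Total rejection probability of a speculative sampling step: Let S be a finite nonempty type and let p, q : S → ℝ be probability mass functions on S (p x ≥ 0, q x ≥ 0 for all x, and ∑_x p x = ∑_x q x = 1). Then ∑_{x ∈ S} p x * (1 − min(1, q x / p x)) = ∑_{x ∈ S} max(0, q x − p x), where real division by zero is taken to equal zero. -/
/-- Total rejection probability of a speculative sampling step. -/
theorem speculative_total_rejection_prob {S : Type*} [Fintype S] [Nonempty S]
    (p q : S → ℝ) (hp : ∀ x, 0 ≤ p x) (hq : ∀ x, 0 ≤ q x)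
    (hpsum : ∑ x, p x = 1) (hqsum : ∑ x, q x = 1) :
    ∑ x, p x * (1 - min 1 (q x / p x)) = ∑ x, max 0 (q x - p x) := by
  have hL : ∀ x, p x * (1 - min 1 (q x / p x)) = p x - min (p x) (q x) := by
    intro x
    rcases eq_or_lt_of_le (hp x) with h | h
    · simp [← h, min_eq_left (hq x)]
    · rw [mul_sub, mul_one, mul_min_of_nonneg _ _ h.le, mul_one,
        mul_div_cancel₀ _ (ne_of_gt h)]
  have hR : ∀ x, max 0 (q x - p x) = q x - min (p x) (q x) := by
    intro x
    rcases le_total (p x) (q x) with h | h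
    · rw [min_eq_left h, max_eq_right (by linarith)]
    · rw [min_eq_right h, max_eq_left (by linarith)]; ring
  simp only [hL, hR, Finset.sum_sub_distrib, hpsum, hqsum]
end

section
/- Reject-case joint law of a speculative sampling step (Lemma A.1, reject part): Let S be a finite nonempty type and let p, q : S → ℝ be probability mass functions on S with p ≠ q. Set R = ∑_{z ∈ S} p z * (1 − min(1, q z / p z)) (the total rejection probability) and Z = ∑_{z ∈ S} max(0, q z − p z). Then for every x ∈ S, R * (max(0, q x − p x) / Z) = max(0, q x − p x), where real division by zero is taken to equal zero. -/
/-- Reject-case joint law of a speculative sampling step (Lemma A.1, reject part). -/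
theorem speculative_reject_joint_law {S : Type*} [Fintype S] [Nonempty S]
    (p q : S → ℝ) (hp : ∀ x, 0 ≤ p x) (hq : ∀ x, 0 ≤ q x)
    (hpsum : ∑ x, p x = 1) (hqsum : ∑ x, q x = 1) (hpq : p ≠ q) (x : S) :
    (∑ z, p z * (1 - min 1 (q z / p z))) *
        (max 0 (q x - p x) / ∑ z, max 0 (q z - p z)) =
      max 0 (q x - p x) := by
  have hterm : ∀ z, p z * (1 - min 1 (q z / p z)) = max 0 (p z - q z) := by
    intro z
    rcases eq_or_lt_of_le (hp z) with h | h
    · simp [← h, div_zero, max_eq_left (by linarith [hq z] : p z - q z ≤ 0), ← h]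
      exact hq z
    · rw [mul_sub, mul_one]
      rcases le_total (q z) (p z) with hle | hle
      · rw [min_eq_right (by rw [div_le_one h]; exact hle), mul_div_cancel₀ _ h.ne',
          max_eq_right (by linarith)]
      · rw [min_eq_left (by rw [le_div_iff₀ h, one_mul]; exact hle), mul_one,
          max_eq_left (by linarith)]
        ring
  have hRZ : (∑ z, p z * (1 - min 1 (q z / p z))) = ∑ z, max 0 (q z - p z) := by
    simp only [hterm]
    have : (∑ z, max 0 (q z - p z)) - ∑ z, max 0 (p z - q z) = 0 := by
      rw [← Finset.sum_sub_distrib]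
      have : ∀ z : S, max 0 (q z - p z) - max 0 (p z - q z) = q z - p z := by
        intro z; rcases le_total (q z) (p z) with h | h
        · rw [max_eq_left (by linarith), max_eq_right (by linarith)]; ring
        · rw [max_eq_right (by linarith), max_eq_left (by linarith)]; ring
      simp [this, Finset.sum_sub_distrib, hpsum, hqsum]
    linarith
  rw [hRZ]
  have hZpos : 0 < ∑ z, max 0 (q z - p z) := by
    obtain ⟨y, hy⟩ : ∃ y, p y ≠ q y := by
      by_contra h; push_neg at h; exact hpq (funext h)
    obtain ⟨w, hw⟩ : ∃ w, p w < q w := by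
      by_contra h; push_neg at h
      have : ∀ z, p z = q z := by
        intro z
        by_contra hne
        have hlt : q z < p z := lt_of_le_of_ne (h z) (Ne.symm hne)
        have : ∑ z, q z < ∑ z, p z :=
          Finset.sum_lt_sum (fun i _ => h i) ⟨z, Finset.mem_univ z, hlt⟩
        rw [hpsum, hqsum] at this; exact lt_irrefl _ this
      exact hy (this y)
    calc (0:ℝ) < max 0 (q w - p w) := by simp [max_eq_right (by linarith : (0:ℝ) ≤ q w - p w)]; linarith
    _ ≤ ∑ z, max 0 (q z - p z) :=
        Finset.single_le_sum (f := fun z => max 0 (q z - p z)) (fun i _ => le_max_left _ _) (Finset.mem_univ w)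
  field_simp
end

section
/- Correctness of a single speculative sampling step: Let S be a finite nonempty type and let p, q : S → ℝ be probability mass functions on S with p ≠ q. Then for every x ∈ S, p x * min(1, q x / p x) + (∑_{z ∈ S} p z * (1 − min(1, q z / p z))) * (max(0, q x − p x) / ∑_{z ∈ S} max(0, q z − p z)) = q x; that is, the output of the speculative step (accept the draft token, or reject and resample from the adjusted distribution) is distributed exactly according to the target q. Real division by zero is taken to equal zero. -/
/-- Correctness of a single speculative sampling step: the output is distributed
exactly according to the target `q`. -/
theorem speculative_step_correct {S : Type*} [Fintype S] [Nonempty S]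
    (p q : S → ℝ) (hp : ∀ x, 0 ≤ p x) (hq : ∀ x, 0 ≤ q x)
    (hpsum : ∑ x, p x = 1) (hqsum : ∑ x, q x = 1) (hpq : p ≠ q) (x : S) :
    p x * min 1 (q x / p x) +
        (∑ z, p z * (1 - min 1 (q z / p z))) *
          (max 0 (q x - p x) / ∑ z, max 0 (q z - p z)) =
      q x := by
  have hmin : ∀ z, p z * min 1 (q z / p z) = min (p z) (q z) := by
    intro z
    rcases eq_or_lt_of_le (hp z) with h0 | h0
    · simp [← h0, min_eq_left (hq z)]
    · rw [mul_min_of_nonneg _ _ (le_of_lt h0), mul_one,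
        mul_div_cancel₀ _ (ne_of_gt h0)]
  have hrej : ∀ z, p z * (1 - min 1 (q z / p z)) = max 0 (p z - q z) := by
    intro z
    rw [mul_sub, mul_one, hmin]
    rcases le_total (p z) (q z) with h | h
    · rw [min_eq_left h, max_eq_left (by linarith), sub_self]
    · rw [min_eq_right h, max_eq_right (by linarith)]
  have hsum_eq : ∑ z, max 0 (p z - q z) = ∑ z, max 0 (q z - p z) := by
    have : ∀ z, max 0 (p z - q z) = max 0 (q z - p z) + (p z - q z) := by
      intro z
      rcases le_total (p z) (q z) with h | h
      · rw [max_eq_left (by linarith), max_eq_right (by linarith)]; ring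
      · rw [max_eq_right (by linarith), max_eq_left (by linarith)]; ring
    simp only [this, Finset.sum_add_distrib, Finset.sum_sub_distrib, hpsum, hqsum]
    ring
  have hpos : 0 < ∑ z, max 0 (q z - p z) := by
    rcases eq_or_lt_of_le (Finset.sum_nonneg fun z _ => le_max_left 0 (q z - p z))
      with h0 | h0
    · exfalso
      apply hpq
      have hall : ∀ z, max 0 (q z - p z) = 0 := by
        intro z
        have := (Finset.sum_eq_zero_iff_of_nonneg
          (fun z _ => le_max_left 0 (q z - p z))).mp h0.symm z (Finset.mem_univ z)
        exact this
      have hle : ∀ z, q z ≤ p z := by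
        intro z
        have := hall z
        by_contra hc
        push_neg at hc
        rw [max_eq_right (by linarith)] at this
        linarith
      funext z
      by_contra hne
      have hlt : q z < p z := lt_of_le_of_ne (hle z) (Ne.symm hne)
      have : ∑ w, q w < ∑ w, p w :=
        Finset.sum_lt_sum (fun w _ => hle w) ⟨z, Finset.mem_univ z, hlt⟩
      rw [hpsum, hqsum] at this
      exact lt_irrefl 1 this
    · exact h0
  rw [hmin, Finset.sum_congr rfl (fun z _ => hrej z), hsum_eq,
    mul_comm, div_mul_cancel₀ _ (ne_of_gt hpos)]
  rcases le_total (p x) (q x) with h | h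
  · rw [min_eq_left h, max_eq_right (by linarith)]; ring
  · rw [min_eq_right h, max_eq_left (by linarith)]; ring
end
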